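/- arXiv:2103.07647 — 2 statements merged into one kernel-verified Lean document; each statement's English description precedes it below -/
import Mathlib

section
/- Let X ⊆ ℂⁿ be open and let f₁,…,f_ν be holomorphic on X. In ℂⁿ × ℂ^ν with coordinates (x, y) define Fⱼ(x, y) = yⱼ − fⱼ(x) on Ω = X × ℂ^ν. Then the system (F₁,…,F_ν) satisfies property (A) on Ω; explicitly: for every q ∈ {2,…,ν}, every point P ∈ Ω, and all functions α₁,…,α_q holomorphic on an open neighborhood U ⊆ Ω of P with α₁F₁ + ⋯ + α_qF_q = 0 on U, there exist an open neighborhood V ⊆ U of P and holomorphic functions β₁,…,β_{q−1} on V with α_q = β₁F₁ + ⋯ + β_{q−1}F_{q−1} on V. -/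
set_option maxHeartbeats 1000000

open Set Metric Complex MeasureTheory intervalIntegral

variable {E : Type*} [NormedAddCommGroup E] [NormedSpace ℂ E]

/-- Cauchy-estimate based local Lipschitz bound for a holomorphic function. -/
lemma holo_lipschitz {U : Set E} (hU : IsOpen U) {α : E → ℂ}
    (hα : DifferentiableOn ℂ α U) {P : E} {r ρ : ℝ} (hr : 0 < r) (hrρ : r < ρ)
    (hball : closedBall P ρ ⊆ U) (hcompact : IsCompact (closedBall P ρ)) :
    ∃ C : ℝ, 0 ≤ C ∧ ∀ x ∈ closedBall P r, ∀ y ∈ closedBall P r,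
      ‖α x - α y‖ ≤ C * ‖x - y‖ := by
  obtain ⟨M, hM⟩ : ∃ M, ∀ x ∈ closedBall P ρ, ‖α x‖ ≤ M :=
    hcompact.exists_bound_of_continuousOn (hα.continuousOn.mono hball)
  have hM0 : 0 ≤ M := le_trans (norm_nonneg _) (hM P (mem_closedBall_self (by linarith)))
  set C : ℝ := (2 * M + 1) / (ρ - r) with hC
  have hC0 : 0 ≤ C := div_nonneg (by linarith) (by linarith)
  refine ⟨C, hC0, ?_⟩
  have key : ∀ x ∈ closedBall P r, ‖fderiv ℂ α x‖ ≤ C := by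
    intro x hx
    refine ContinuousLinearMap.opNorm_le_bound _ hC0 ?_
    intro u
    rcases eq_or_ne u 0 with rfl | hu
    · simp
    · -- normalize
      set a : ℂ := (‖u‖ : ℂ) with ha
      have ha0 : a ≠ 0 := by
        simp [ha, Complex.ofReal_eq_zero, norm_eq_zero, hu]
      set u' : E := a⁻¹ • u with hu'
      have hu'norm : ‖u'‖ = 1 := by
        rw [hu', norm_smul, norm_inv, ha, Complex.norm_real, Real.norm_eq_abs,
          _root_.abs_of_nonneg (norm_nonneg u), inv_mul_cancel₀ (norm_ne_zero_iff.2 hu)]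
      have hder : ∀ u' : E, ‖u'‖ ≤ 1 → ‖fderiv ℂ α x u'‖ ≤ C := by
        intro w hw
        -- one-variable slice
        set g : ℂ → ℂ := fun s => α (x + s • w) with hg
        have hmem : ∀ s : ℂ, s ∈ ball (0:ℂ) (ρ - r) → x + s • w ∈ closedBall P ρ := by
          intro s hs
          rw [mem_closedBall]
          have : dist (x + s • w) x ≤ ‖s‖ := by
            rw [dist_eq_norm, add_sub_cancel_left, norm_smul]
            calc ‖s‖ * ‖w‖ ≤ ‖s‖ * 1 := by
                  exact mul_le_mul_of_nonneg_left hw (norm_nonneg s)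
              _ = ‖s‖ := mul_one _
          calc dist (x + s • w) P ≤ dist (x + s • w) x + dist x P := dist_triangle _ _ _
            _ ≤ ‖s‖ + r := add_le_add this (mem_closedBall.1 hx)
            _ ≤ ρ := by
                have : ‖s‖ < ρ - r := by simpa [mem_ball, dist_eq_norm] using hs
                linarith
        have hgd : DifferentiableOn ℂ g (ball (0:ℂ) (ρ - r)) := by
          intro s hs
          have h1 : DifferentiableAt ℂ (fun s : ℂ => x + s • w) s :=
            (differentiableAt_id.smul_const w).const_add x
          have h2 : DifferentiableAt ℂ α (x + s • w) :=
            hα.differentiableAt (hU.mem_nhds (hball (hmem s hs)))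
          exact (h2.comp s h1).differentiableWithinAt
        have hmaps : MapsTo g (ball (0:ℂ) (ρ - r)) (ball (g 0) (2*M+1)) := by
          intro s hs
          rw [mem_ball]
          have h1 : ‖g s‖ ≤ M := hM _ (hmem s hs)
          have h2 : ‖g 0‖ ≤ M := hM _ (by simpa using hmem 0 (by simp [mem_ball]; linarith))
          calc dist (g s) (g 0) ≤ ‖g s‖ + ‖g 0‖ := by
                rw [dist_eq_norm]; exact norm_sub_le _ _
            _ ≤ 2*M := by linarith
            _ < 2*M + 1 := by linarith
        have hderiv := Complex.norm_deriv_le_div_of_mapsTo_ball hgd (hmaps.mono_right ball_subset_closedBall) (by linarith)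
        -- deriv g 0 = fderiv α x w
        have hxU : DifferentiableAt ℂ α x := hα.differentiableAt (hU.mem_nhds (hball
          (closedBall_subset_closedBall hrρ.le hx)))
        have hcomp : HasDerivAt g (fderiv ℂ α x w) 0 := by
          have h1 : HasDerivAt (fun s : ℂ => x + s • w) w 0 := by
            simpa using ((hasDerivAt_id (0:ℂ)).smul_const w).const_add x
          have h2 : HasFDerivAt α (fderiv ℂ α x) (x + (0:ℂ) • w) := by
            simpa using hxU.hasFDerivAt
          exact h2.comp_hasDerivAt 0 h1
        rw [← hcomp.deriv]
        exact hderiv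
      have := hder u' (le_of_eq hu'norm)
      have heq : fderiv ℂ α x u = a • fderiv ℂ α x u' := by
        rw [hu', _root_.map_smul, smul_smul, mul_inv_cancel₀ ha0, one_smul]
      rw [heq, norm_smul]
      have : ‖a‖ = ‖u‖ := by
        rw [ha, Complex.norm_real, Real.norm_eq_abs, _root_.abs_of_nonneg (norm_nonneg u)]
      rw [this]
      calc ‖u‖ * ‖fderiv ℂ α x u'‖ ≤ ‖u‖ * C := by
            exact mul_le_mul_of_nonneg_left (hder u' hu'norm.le) (norm_nonneg u)
        _ = C * ‖u‖ := mul_comm _ _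
  intro x hx y hy
  exact (convex_closedBall P r).norm_image_sub_le_of_norm_fderiv_le
    (fun z hz => hα.differentiableAt (hU.mem_nhds (hball
      (closedBall_subset_closedBall hrρ.le hz)))) key hy hx


lemma holo_div [MeasurableSpace E] [BorelSpace E] [FiniteDimensional ℂ E]
    {U : Set E} (hU : IsOpen U) {α w : E → ℂ}
    (hα : DifferentiableOn ℂ α U) (hw : DifferentiableOn ℂ w U)
    {v : E} (hv : ‖v‖ ≤ 1) (hwv : ∀ (z : E) (a : ℂ), w (z + a • v) = w z + a)
    {P : E} (hP : P ∈ U) (hwP : w P = 0) :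
    ∃ V : Set E, IsOpen V ∧ P ∈ V ∧ V ⊆ U ∧ ∃ γ : E → ℂ,
      DifferentiableOn ℂ γ V ∧
      ∀ z ∈ V, (z - w z • v ∈ U ∧ α z - α (z - w z • v) = γ z * w z) := by
  obtain ⟨ρ₂, hρ₂, hball₂⟩ := Metric.isOpen_iff.1 hU P hP
  set ρ : ℝ := ρ₂ / 2 with hρdef
  have hρ : 0 < ρ := by positivity
  have hball : closedBall P ρ ⊆ U :=
    (closedBall_subset_ball (by simp only [hρdef]; linarith)).trans hball₂
  set R : ℝ := ρ / 8 with hRdef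
  have hR : 0 < R := by positivity
  have hhalf : closedBall P (ρ/2) ⊆ U :=
    (closedBall_subset_closedBall (by linarith)).trans hball
  obtain ⟨Cα, hCα0, hCα⟩ := holo_lipschitz hU hα (by positivity : (0:ℝ) < ρ/2)
    (by linarith : ρ/2 < ρ) hball (isCompact_closedBall P ρ)
  obtain ⟨Cw, hCw0, hCw⟩ := holo_lipschitz hU hw (by positivity : (0:ℝ) < ρ/2)
    (by linarith : ρ/2 < ρ) hball (isCompact_closedBall P ρ)
  obtain ⟨M, hM⟩ := (isCompact_closedBall P ρ).exists_bound_of_continuousOn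
    (hα.continuousOn.mono hball)
  have hM0 : 0 ≤ M := le_trans (norm_nonneg _) (hM P (mem_closedBall_self hρ.le))
  set V : Set E := ball P R ∩ (U ∩ w ⁻¹' ball 0 (R/2)) with hVdef
  have hVopen : IsOpen V :=
    isOpen_ball.inter (hw.continuousOn.isOpen_inter_preimage hU isOpen_ball)
  have hPV : P ∈ V := by
    refine ⟨mem_ball_self hR, hP, ?_⟩
    simp [hwP, hR, mem_ball, half_pos hR]
  have hVU : V ⊆ U := fun z hz => hz.2.1
  have hVw : ∀ z ∈ V, ‖w z‖ < R / 2 := by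
    intro z hz
    have := hz.2.2
    simpa [mem_ball, dist_zero_right] using this
  have hVP : ∀ z ∈ V, ‖z - P‖ < R := by
    intro z hz
    simpa [mem_ball, dist_eq_norm] using hz.1
  have hVhalf : ∀ z ∈ V, z ∈ closedBall P (ρ/2) := by
    intro z hz
    rw [mem_closedBall, dist_eq_norm]
    have := hVP z hz
    have : ‖z - P‖ < ρ/8 := this
    linarith
  -- geometry: all relevant points stay in `closedBall P (ρ/2)`
  have hgeo : ∀ z ∈ V, ∀ s : ℂ, ‖s‖ ≤ R → z + (s - w z) • v ∈ closedBall P (ρ/2) := by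
    intro z hz s hs
    rw [mem_closedBall, dist_eq_norm]
    have h1 : z + (s - w z) • v - P = (z - P) + (s - w z) • v := by abel
    rw [h1]
    have h2 : ‖(s - w z) • v‖ ≤ ‖s - w z‖ := by
      rw [norm_smul]
      calc ‖s - w z‖ * ‖v‖ ≤ ‖s - w z‖ * 1 :=
            mul_le_mul_of_nonneg_left hv (norm_nonneg _)
        _ = ‖s - w z‖ := mul_one _
    have h3 : ‖s - w z‖ ≤ R + R/2 := by
      calc ‖s - w z‖ ≤ ‖s‖ + ‖w z‖ := norm_sub_le _ _
        _ ≤ R + R/2 := add_le_add hs (hVw z hz).le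
    calc ‖(z - P) + (s - w z) • v‖ ≤ ‖z - P‖ + ‖(s - w z) • v‖ := norm_add_le _ _
      _ ≤ R + (R + R/2) := add_le_add (hVP z hz).le (h2.trans h3)
      _ ≤ ρ/2 := by rw [hRdef]; linarith
  -- circle facts
  have hs_norm : ∀ θ : ℝ, ‖circleMap 0 R θ‖ = R := by
    intro θ
    simp [norm_circleMap_zero, _root_.abs_of_nonneg hR.le]
  have hsw_ne : ∀ z ∈ V, ∀ θ : ℝ, circleMap 0 R θ - w z ≠ 0 := by
    intro z hz θ h
    have : circleMap 0 R θ = w z := by linear_combination h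
    have h2 := hVw z hz
    rw [← this, hs_norm θ] at h2
    linarith
  have hs_ne : ∀ θ : ℝ, circleMap 0 R θ ≠ 0 := fun θ => circleMap_ne_center hR.ne'
  have hswlb : ∀ z ∈ V, ∀ θ : ℝ, R/2 ≤ ‖circleMap 0 R θ - w z‖ := by
    intro z hz θ
    have h1 := norm_sub_norm_le (circleMap 0 R θ) (w z)
    rw [hs_norm θ] at h1
    have h2 := hVw z hz
    linarith
  have hklb : ∀ z ∈ V, ∀ θ : ℝ, R * (R/2) ≤ ‖circleMap 0 R θ * (circleMap 0 R θ - w z)‖ := by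
    intro z hz θ
    rw [norm_mul, hs_norm θ]
    exact mul_le_mul_of_nonneg_left (hswlb z hz θ) hR.le
  have hk_ne : ∀ z ∈ V, ∀ θ : ℝ, circleMap 0 R θ * (circleMap 0 R θ - w z) ≠ 0 :=
    fun z hz θ => mul_ne_zero (hs_ne θ) (hsw_ne z hz θ)
  have hkinv_ub : ∀ z ∈ V, ∀ θ : ℝ, ‖(circleMap 0 R θ * (circleMap 0 R θ - w z))⁻¹‖ ≤ 2/(R*R) := by
    intro z hz θ
    rw [norm_inv]
    rw [show (2:ℝ)/(R*R) = (R*(R/2))⁻¹ by field_simp]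
    exact inv_anti₀ (by positivity) (hklb z hz θ)
  -- the integrand and the function γ
  set G : E → ℝ → ℂ := fun z θ =>
    (circleMap 0 R θ * I) *
      ((circleMap 0 R θ * (circleMap 0 R θ - w z))⁻¹ *
        α (z + (circleMap 0 R θ - w z) • v)) with hGdef
  set γ : E → ℂ := fun z => (2 * Real.pi * I : ℂ)⁻¹ * ∫ θ in (0:ℝ)..(2*Real.pi), G z θ with hγdef
  -- γ as a circle integral
  have hrep : ∀ z, γ z = (2 * Real.pi * I : ℂ)⁻¹ *
      ∮ s in C(0, R), (s * (s - w z))⁻¹ * α (z + (s - w z) • v) := by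
    intro z
    simp only [hγdef, circleIntegral, deriv_circleMap, smul_eq_mul, hGdef]
  -- continuity of the integrand
  have hGcont : ∀ z ∈ V, Continuous (fun θ => G z θ) := by
    intro z hz
    have hmap : Continuous (fun θ : ℝ => z + (circleMap 0 R θ - w z) • v) :=
      continuous_const.add (((continuous_circleMap 0 R).sub continuous_const).smul
        continuous_const)
    have hαc : Continuous (fun θ : ℝ => α (z + (circleMap 0 R θ - w z) • v)) :=
      (hα.continuousOn.mono hhalf).comp_continuous hmap
        (fun θ => hgeo z hz _ (le_of_eq (hs_norm θ)))
    have hkc : Continuous (fun θ : ℝ =>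
        (circleMap 0 R θ * (circleMap 0 R θ - w z))⁻¹) :=
      Continuous.inv₀ ((continuous_circleMap 0 R).mul
        ((continuous_circleMap 0 R).sub continuous_const)) (hk_ne z hz)
    exact (((continuous_circleMap 0 R).mul continuous_const).mul (hkc.mul hαc))
  -- value identity
  have hval : ∀ z ∈ V, α z - α (z - w z • v) = γ z * w z := by
    intro z hz
    by_cases hwz : w z = 0
    · simp [hwz]
    · set g : ℂ → ℂ := fun s => α (z + (s - w z) • v) with hgdef
      have hgdc : DiffContOnCl ℂ g (ball 0 R) := by
        refine DifferentiableOn.diffContOnCl ?_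
        intro s hs
        have hs' : ‖s‖ ≤ R := by
          have := closure_ball_subset_closedBall hs
          simpa [mem_closedBall, dist_zero_right] using this
        have h1 : DifferentiableAt ℂ (fun s : ℂ => z + (s - w z) • v) s :=
          (((differentiableAt_id).sub_const (w z)).smul_const v).const_add z
        have h2 : DifferentiableAt ℂ α (z + (s - w z) • v) :=
          hα.differentiableAt (hU.mem_nhds (hhalf (hgeo z hz s hs')))
        exact (h2.comp s h1).differentiableWithinAt
      have hCw' : w z ∈ ball (0:ℂ) R := by
        rw [mem_ball, dist_zero_right]
        have := hVw z hz; linarith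
      have h0ball : (0:ℂ) ∈ ball (0:ℂ) R := mem_ball_self hR
      have hC1 := hgdc.circleIntegral_sub_inv_smul hCw'
      have hC0 := hgdc.circleIntegral_sub_inv_smul h0ball
      have hgcont : ContinuousOn g (closedBall (0:ℂ) R) := hgdc.continuousOn_ball
      have hint1 : CircleIntegrable (fun s => (s - w z)⁻¹ • g s) 0 R := by
        refine ContinuousOn.circleIntegrable hR.le ?_
        refine ContinuousOn.smul (f := fun s => (s - w z)⁻¹) ?_ (hgcont.mono sphere_subset_closedBall)
        intro s hs
        refine (ContinuousAt.continuousWithinAt ?_)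
        have hne : s - w z ≠ 0 := by
          simp only [mem_sphere_iff_norm, sub_zero] at hs
          intro h
          have : s = w z := by linear_combination h
          have h2 := hVw z hz
          rw [← this, hs] at h2
          linarith
        exact (continuousAt_id.sub continuousAt_const).inv₀ hne
      have hint0 : CircleIntegrable (fun s => (s - 0)⁻¹ • g s) 0 R := by
        refine ContinuousOn.circleIntegrable hR.le ?_
        refine ContinuousOn.smul (f := fun s => (s - 0)⁻¹) ?_ (hgcont.mono sphere_subset_closedBall)
        intro s hs
        refine (ContinuousAt.continuousWithinAt ?_)
        have hne : s - 0 ≠ 0 := by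
          simp only [mem_sphere_iff_norm, sub_zero] at hs
          simp only [sub_zero]
          intro h; rw [h] at hs; simp at hs; linarith
        exact (continuousAt_id.sub continuousAt_const).inv₀ hne
      -- partial fractions on the sphere
      have heqon : EqOn (fun s : ℂ => (s * (s - w z))⁻¹ * α (z + (s - w z) • v))
          (fun s : ℂ => (w z)⁻¹ • ((s - w z)⁻¹ • g s - (s - 0)⁻¹ • g s))
          (sphere (0:ℂ) R) := by
        intro s hs
        simp only [mem_sphere_iff_norm, sub_zero] at hs
        have hne0 : s ≠ 0 := by
          intro h; rw [h] at hs; simp at hs; linarith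
        have hnew : s - w z ≠ 0 := by
          intro h
          have : s = w z := by linear_combination h
          have h2 := hVw z hz
          rw [← this, hs] at h2; linarith
        simp only [smul_eq_mul, sub_zero, hgdef]
        field_simp
        ring
      have hsplit : (∮ s in C(0, R), (s * (s - w z))⁻¹ * α (z + (s - w z) • v))
          = (w z)⁻¹ • ((∮ s in C(0, R), (s - w z)⁻¹ • g s)
            - ∮ s in C(0, R), (s - 0)⁻¹ • g s) := by
        rw [circleIntegral.integral_congr hR.le heqon,
          circleIntegral.integral_smul, circleIntegral.integral_sub hint1 hint0]
      have hg0 : g 0 = α (z - w z • v) := by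
        have : z + ((0:ℂ) - w z) • v = z - w z • v := by
          rw [zero_sub, neg_smul, sub_eq_add_neg]
        rw [hgdef]; simp only []; rw [this]
      have hgw : g (w z) = α z := by
        simp only [hgdef, sub_self, zero_smul, add_zero]
      rw [hrep z, hsplit, hC1]
      have hC0' : (∮ s in C(0, R), (s - 0)⁻¹ • g s) = (2 * Real.pi * I : ℂ) • g 0 := hC0
      rw [hC0', hgw, hg0]
      have hpi : (2 * Real.pi * I : ℂ) ≠ 0 := by
        simp [Real.pi_ne_zero, I_ne_zero]
      field_simp
      ring_nf
      simp only [mul_inv_cancel_right₀ hwz]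
  -- differentiability of γ on V
  have hγdiff : DifferentiableOn ℂ γ V := by
    intro z₀ hz₀
    obtain ⟨ε, hε, hεV⟩ := Metric.isOpen_iff.1 hVopen z₀ hz₀
    have hz₀U : z₀ ∈ U := hVU hz₀
    set Dw : E →L[ℂ] ℂ := fderiv ℂ w z₀ with hDwdef
    have hw0 : HasFDerivAt w Dw z₀ := (hw.differentiableAt (hU.mem_nhds hz₀U)).hasFDerivAt
    set Dψ : E →L[ℂ] E :=
      ContinuousLinearMap.id ℂ E + (((0:E →L[ℂ] ℂ) - Dw).smulRight v) with hDψdef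
    set A : ℝ → (E →L[ℂ] ℂ) :=
      fun θ => fderiv ℂ α (z₀ + (circleMap 0 R θ - w z₀) • v) with hAdef
    set c₁ : ℝ → ℂ := fun θ =>
      (circleMap 0 R θ * I) * (circleMap 0 R θ * (circleMap 0 R θ - w z₀))⁻¹ with hc₁def
    set c₂ : ℝ → ℂ := fun θ =>
      (circleMap 0 R θ * I) * (α (z₀ + (circleMap 0 R θ - w z₀) • v) *
        (-((circleMap 0 R θ * (circleMap 0 R θ - w z₀))⁻¹ * circleMap 0 R θ *
          (circleMap 0 R θ * (circleMap 0 R θ - w z₀))⁻¹))) with hc₂def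
    set F' : ℝ → (E →L[ℂ] ℂ) := fun θ =>
      (c₁ θ) • ((A θ).comp Dψ) + (c₂ θ) • ((0:E →L[ℂ] ℂ) - Dw) with hF'def
    set Cb : ℝ := R * ((2/(R*R)) * (Cα * (1+Cw)) +
      M * (R * Cw * ((2/(R*R)) * (2/(R*R))))) with hCbdef
    have hCb0 : 0 ≤ Cb := by positivity
    -- derivative of the integrand at z₀, for every θ
    have h_diff : ∀ θ : ℝ, HasFDerivAt (fun z => G z θ) (F' θ) z₀ := by
      intro θ
      have h1 : HasFDerivAt (fun z => circleMap 0 R θ - w z) ((0:E→L[ℂ]ℂ) - Dw) z₀ :=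
        (hasFDerivAt_const (circleMap 0 R θ) z₀).sub hw0
      have h2 : HasFDerivAt (fun z => (circleMap 0 R θ - w z) • v)
          (((0:E→L[ℂ]ℂ) - Dw).smulRight v) z₀ := h1.smul_const v
      have h3 : HasFDerivAt (fun z => z + (circleMap 0 R θ - w z) • v) Dψ z₀ :=
        (hasFDerivAt_id z₀).add h2
      have hpmem : z₀ + (circleMap 0 R θ - w z₀) • v ∈ U :=
        hhalf (hgeo z₀ hz₀ _ (le_of_eq (hs_norm θ)))
      have h4 : HasFDerivAt α (A θ) (z₀ + (circleMap 0 R θ - w z₀) • v) :=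
        (hα.differentiableAt (hU.mem_nhds hpmem)).hasFDerivAt
      have h5 : HasFDerivAt (fun z => α (z + (circleMap 0 R θ - w z) • v))
          ((A θ).comp Dψ) z₀ := h4.comp z₀ h3
      have h6 : HasFDerivAt (fun z => circleMap 0 R θ * (circleMap 0 R θ - w z))
          (circleMap 0 R θ • ((0:E→L[ℂ]ℂ) - Dw)) z₀ := h1.const_mul _
      have h7 : HasFDerivAt (fun z => (circleMap 0 R θ * (circleMap 0 R θ - w z))⁻¹)
          ((-(ContinuousLinearMap.mulLeftRight ℂ ℂ
              (circleMap 0 R θ * (circleMap 0 R θ - w z₀))⁻¹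
              (circleMap 0 R θ * (circleMap 0 R θ - w z₀))⁻¹)).comp
            (circleMap 0 R θ • ((0:E→L[ℂ]ℂ) - Dw))) z₀ :=
        (hasFDerivAt_inv' (hk_ne z₀ hz₀ θ)).comp z₀ h6
      have h8 := (h7.mul h5).const_mul (circleMap 0 R θ * I)
      have h9 : HasFDerivAt (fun z => G z θ)
          ((circleMap 0 R θ * I) •
            ((circleMap 0 R θ * (circleMap 0 R θ - w z₀))⁻¹ • ((A θ).comp Dψ) +
              α (z₀ + (circleMap 0 R θ - w z₀) • v) •
                ((-(ContinuousLinearMap.mulLeftRight ℂ ℂ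
                    (circleMap 0 R θ * (circleMap 0 R θ - w z₀))⁻¹
                    (circleMap 0 R θ * (circleMap 0 R θ - w z₀))⁻¹)).comp
                  (circleMap 0 R θ • ((0:E→L[ℂ]ℂ) - Dw))))) z₀ := h8
      have h10 : F' θ = (circleMap 0 R θ * I) •
            ((circleMap 0 R θ * (circleMap 0 R θ - w z₀))⁻¹ • ((A θ).comp Dψ) +
              α (z₀ + (circleMap 0 R θ - w z₀) • v) •
                ((-(ContinuousLinearMap.mulLeftRight ℂ ℂ
                    (circleMap 0 R θ * (circleMap 0 R θ - w z₀))⁻¹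
                    (circleMap 0 R θ * (circleMap 0 R θ - w z₀))⁻¹)).comp
                  (circleMap 0 R θ • ((0:E→L[ℂ]ℂ) - Dw)))) := by
        ext u
        simp only [hF'def, hc₁def, hc₂def, ContinuousLinearMap.add_apply,
          ContinuousLinearMap.smul_apply, ContinuousLinearMap.comp_apply,
          ContinuousLinearMap.neg_apply, ContinuousLinearMap.mulLeftRight_apply,
          ContinuousLinearMap.sub_apply, ContinuousLinearMap.zero_apply,
          smul_eq_mul]
        ring
      rw [h10]
      exact h9
    -- measurability of F'
    have hmapc : Continuous (fun θ : ℝ => z₀ + (circleMap 0 R θ - w z₀) • v) :=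
      continuous_const.add (((continuous_circleMap 0 R).sub continuous_const).smul
        continuous_const)
    have hA_sm : MeasureTheory.StronglyMeasurable A :=
      ((measurable_fderiv ℂ α).comp hmapc.measurable).stronglyMeasurable
    have hACD_sm : MeasureTheory.StronglyMeasurable (fun θ => (A θ).comp Dψ) := by
      have hcont : Continuous (fun T : E →L[ℂ] ℂ => T.comp Dψ) := by
        have : (fun T : E →L[ℂ] ℂ => T.comp Dψ) =
            fun T => (ContinuousLinearMap.compL ℂ E E ℂ).flip Dψ T := by
          funext T; simp
        rw [this]
        exact ((ContinuousLinearMap.compL ℂ E E ℂ).flip Dψ).continuous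
      exact hcont.comp_stronglyMeasurable hA_sm
    have hkc : Continuous (fun θ : ℝ =>
        (circleMap 0 R θ * (circleMap 0 R θ - w z₀))⁻¹) :=
      Continuous.inv₀ ((continuous_circleMap 0 R).mul
        ((continuous_circleMap 0 R).sub continuous_const)) (hk_ne z₀ hz₀)
    have hαc : Continuous (fun θ : ℝ => α (z₀ + (circleMap 0 R θ - w z₀) • v)) :=
      (hα.continuousOn.mono hhalf).comp_continuous hmapc
        (fun θ => hgeo z₀ hz₀ _ (le_of_eq (hs_norm θ)))
    have hc₁c : Continuous c₁ :=
      ((continuous_circleMap 0 R).mul continuous_const).mul hkc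
    have hc₂c : Continuous c₂ :=
      ((continuous_circleMap 0 R).mul continuous_const).mul
        (hαc.mul (((hkc.mul (continuous_circleMap 0 R)).mul hkc).neg))
    have hF'_sm : MeasureTheory.StronglyMeasurable F' := by
      apply MeasureTheory.StronglyMeasurable.add
      · exact (hc₁c.stronglyMeasurable).smul hACD_sm
      · exact (hc₂c.stronglyMeasurable).smul_const ((0:E →L[ℂ] ℂ) - Dw)
    -- the Lipschitz estimate
    have h_lip : ∀ θ : ℝ, LipschitzOnWith (Real.nnabs Cb) (fun z => G z θ) (ball z₀ ε) := by
      intro θ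
      apply LipschitzOnWith.of_dist_le_mul
      intro z hzb z' hz'b
      have hz : z ∈ V := hεV hzb
      have hz' : z' ∈ V := hεV hz'b
      set s : ℂ := circleMap 0 R θ with hsdef
      set az : ℂ := α (z + (s - w z) • v) with hazdef
      set az' : ℂ := α (z' + (s - w z') • v) with haz'def
      set kz : ℂ := s * (s - w z) with hkzdef
      set kz' : ℂ := s * (s - w z') with hkz'def
      have hkzne : kz ≠ 0 := hk_ne z hz θ
      have hkz'ne : kz' ≠ 0 := hk_ne z' hz' θ
      have hwlip : ‖w z - w z'‖ ≤ Cw * ‖z - z'‖ :=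
        hCw z (hVhalf z hz) z' (hVhalf z' hz')
      have hptdiff : ‖(z + (s - w z) • v) - (z' + (s - w z') • v)‖ ≤
          (1 + Cw) * ‖z - z'‖ := by
        have heq : (z + (s - w z) • v) - (z' + (s - w z') • v)
            = (z - z') + (w z' - w z) • v := by
          rw [sub_smul, sub_smul]
          module
        rw [heq]
        have h2 : ‖(w z' - w z) • v‖ ≤ ‖w z' - w z‖ := by
          rw [norm_smul]
          calc ‖w z' - w z‖ * ‖v‖ ≤ ‖w z' - w z‖ * 1 :=
              mul_le_mul_of_nonneg_left hv (norm_nonneg _)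
            _ = _ := mul_one _
        have h3 : ‖w z' - w z‖ ≤ Cw * ‖z - z'‖ := by
          rw [norm_sub_rev]; exact hwlip
        calc ‖(z - z') + (w z' - w z) • v‖ ≤ ‖z - z'‖ + ‖(w z' - w z) • v‖ :=
              norm_add_le _ _
          _ ≤ ‖z - z'‖ + Cw * ‖z - z'‖ := add_le_add le_rfl (h2.trans h3)
          _ = (1 + Cw) * ‖z - z'‖ := by ring
      have b1 : ‖az - az'‖ ≤ Cα * ((1 + Cw) * ‖z - z'‖) := by
        have := hCα _ (hgeo z hz s (le_of_eq (hs_norm θ)))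
          _ (hgeo z' hz' s (le_of_eq (hs_norm θ)))
        exact this.trans (mul_le_mul_of_nonneg_left hptdiff hCα0)
      have b2 : ‖kz⁻¹ - kz'⁻¹‖ ≤ R * (Cw * ‖z - z'‖) * ((2/(R*R)) * (2/(R*R))) := by
        have hident : kz⁻¹ - kz'⁻¹ = (s * (w z - w z')) * (kz⁻¹ * kz'⁻¹) := by
          field_simp
          rw [hkzdef, hkz'def]
          ring
        rw [hident]
        rw [norm_mul, norm_mul, norm_mul]
        have hswz : ‖s‖ * ‖w z - w z'‖ ≤ R * (Cw * ‖z - z'‖) := by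
          rw [hsdef, hs_norm θ]
          exact mul_le_mul_of_nonneg_left hwlip hR.le
        have hkinv : ‖kz⁻¹‖ * ‖kz'⁻¹‖ ≤ (2/(R*R)) * (2/(R*R)) :=
          mul_le_mul (hkinv_ub z hz θ) (hkinv_ub z' hz' θ) (norm_nonneg _) (by positivity)
        exact mul_le_mul hswz hkinv (by positivity) (by positivity)
      have hGdiff : G z θ - G z' θ = (s * I) * (kz⁻¹ * (az - az') + (kz⁻¹ - kz'⁻¹) * az') := by
        simp only [hGdef, hsdef, hazdef, haz'def, hkzdef, hkz'def]
        ring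
      rw [dist_eq_norm, dist_eq_norm, hGdiff]
      have haz'M : ‖az'‖ ≤ M := hM _ ((closedBall_subset_closedBall (by linarith))
        (hgeo z' hz' s (le_of_eq (hs_norm θ))))
      have hnorm1 : ‖(s*I) * (kz⁻¹ * (az - az') + (kz⁻¹ - kz'⁻¹) * az')‖
          ≤ R * ((2/(R*R)) * (Cα * ((1+Cw) * ‖z - z'‖)) +
              R * (Cw * ‖z - z'‖) * ((2/(R*R)) * (2/(R*R))) * M) := by
        rw [norm_mul]
        have hsI : ‖s * I‖ = R := by
          rw [norm_mul, Complex.norm_I, mul_one, hsdef, hs_norm θ]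
        rw [hsI]
        refine mul_le_mul_of_nonneg_left ?_ hR.le
        calc ‖kz⁻¹ * (az - az') + (kz⁻¹ - kz'⁻¹) * az'‖
            ≤ ‖kz⁻¹ * (az - az')‖ + ‖(kz⁻¹ - kz'⁻¹) * az'‖ := norm_add_le _ _
          _ ≤ (2/(R*R)) * (Cα * ((1+Cw) * ‖z - z'‖)) +
              R * (Cw * ‖z - z'‖) * ((2/(R*R)) * (2/(R*R))) * M := by
              refine add_le_add ?_ ?_
              · rw [norm_mul]
                exact mul_le_mul (hkinv_ub z hz θ) b1 (norm_nonneg _) (by positivity)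
              · rw [norm_mul]
                exact mul_le_mul b2 haz'M (norm_nonneg _) (by positivity)
      refine hnorm1.trans ?_
      have hcoe : ((Real.nnabs Cb) : ℝ) = Cb := by
        rw [Real.coe_nnabs]; exact _root_.abs_of_nonneg hCb0
      rw [hcoe, hCbdef]
      rw [← dist_eq_norm] at *
      nlinarith [dist_nonneg (x := z) (y := z'), hR.le, hCα0, hCw0, hM0]
    -- apply parametric differentiation
    have key := hasFDerivAt_integral_of_dominated_loc_of_lip
      (μ := volume.restrict (Set.Ioc (0:ℝ) (2*Real.pi)))
      (F := G) (F' := F') (x₀ := z₀) (bound := fun _ => Cb) (ball_mem_nhds z₀ hε)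
      (by
        filter_upwards [hVopen.mem_nhds hz₀] with z hz
        exact (hGcont z hz).aestronglyMeasurable)
      ((hGcont z₀ hz₀).integrableOn_Ioc)
      hF'_sm.aestronglyMeasurable
      (Filter.Eventually.of_forall h_lip)
      (MeasureTheory.integrableOn_const measure_Ioc_lt_top.ne)
      (Filter.Eventually.of_forall h_diff)
    have heq : γ = fun z => (2 * Real.pi * I : ℂ)⁻¹ *
        ∫ θ, G z θ ∂(volume.restrict (Set.Ioc (0:ℝ) (2*Real.pi))) := by
      funext z
      rw [hγdef]
      simp only []
      rw [intervalIntegral.integral_of_le Real.two_pi_pos.le]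
    have hda : DifferentiableAt ℂ γ z₀ := by
      rw [heq]
      exact (key.2.differentiableAt).const_mul _
    exact hda.differentiableWithinAt
  refine ⟨V, hVopen, hPV, hVU, γ, hγdiff, fun z hz => ⟨?_, hval z hz⟩⟩
  have := hgeo z hz 0 (by simp [hR.le])
  have heq : z + ((0:ℂ) - w z) • v = z - w z • v := by
    rw [zero_sub, neg_smul, sub_eq_add_neg]
  rw [heq] at this
  exact hhalf this



/-- The system `Fⱼ(x,y) = yⱼ − fⱼ(x)` attached to an Oka map satisfies property (A)
on `Ω = X × ℂ^ν`. -/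
theorem oka_map_property_A (n ν : ℕ) (X : Set (Fin n → ℂ)) (hX : IsOpen X)
    (f : Fin ν → (Fin n → ℂ) → ℂ) (hf : ∀ j, DifferentiableOn ℂ (f j) X) :
    ∀ (q : ℕ) (hq2 : 2 ≤ q) (hqν : q ≤ ν),
    ∀ P ∈ X ×ˢ (univ : Set (Fin ν → ℂ)),
    ∀ U : Set ((Fin n → ℂ) × (Fin ν → ℂ)), IsOpen U → P ∈ U → U ⊆ X ×ˢ univ →
    ∀ α : Fin q → ((Fin n → ℂ) × (Fin ν → ℂ)) → ℂ,
      (∀ i, DifferentiableOn ℂ (α i) U) →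
      (∀ z ∈ U, ∑ i : Fin q,
        α i z * (z.2 (Fin.castLE hqν i) - f (Fin.castLE hqν i) z.1) = 0) →
    ∃ V : Set ((Fin n → ℂ) × (Fin ν → ℂ)), IsOpen V ∧ P ∈ V ∧ V ⊆ U ∧
      ∃ β : Fin (q - 1) → ((Fin n → ℂ) × (Fin ν → ℂ)) → ℂ,
        (∀ i, DifferentiableOn ℂ (β i) V) ∧
        ∀ z ∈ V, α ⟨q - 1, by omega⟩ z = ∑ i : Fin (q - 1),
          β i z * (z.2 (Fin.castLE (by omega) i) - f (Fin.castLE (by omega) i) z.1) := by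
  intro q hq2 hqν P hP U hU hPU hUX α hα hrel
  obtain ⟨r, rfl⟩ : ∃ r, q = r + 1 := ⟨q - 1, by omega⟩
  simp only [Nat.add_sub_cancel]
  set jL : Fin ν := Fin.castLE hqν ⟨r, by omega⟩ with hjLdef
  set w : ((Fin n → ℂ) × (Fin ν → ℂ)) → ℂ := fun z => z.2 jL - f jL z.1 with hwdef
  set v : ((Fin n → ℂ) × (Fin ν → ℂ)) := (0, Pi.single jL 1) with hvdef
  set L : Fin (r+1) := ⟨r, by omega⟩ with hLdef
  have hv : ‖v‖ ≤ 1 := by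
    rw [hvdef, Prod.norm_def]
    simp [Pi.norm_single]
  have hwv : ∀ (z : (Fin n → ℂ) × (Fin ν → ℂ)) (a : ℂ), w (z + a • v) = w z + a := by
    intro z a
    rw [hwdef]
    simp only [hvdef, Prod.snd_add, Prod.fst_add, Prod.smul_mk, smul_zero, add_zero,
      Pi.add_apply, Pi.smul_apply, Pi.single_eq_same, smul_eq_mul, mul_one]
    ring
  -- differentiability of w on U
  have hwdiff : DifferentiableOn ℂ w U := by
    apply DifferentiableOn.sub
    · apply Differentiable.differentiableOn
      fun_prop
    · exact (hf jL).comp (differentiable_fst.differentiableOn)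
        (fun z hz => (hUX hz).1)
  -- the functions Fᵢ
  set Fi : Fin (r+1) → ((Fin n → ℂ) × (Fin ν → ℂ)) → ℂ :=
    fun i z => z.2 (Fin.castLE hqν i) - f (Fin.castLE hqν i) z.1 with hFidef
  have hFlast : ∀ z, Fi L z = w z := fun z => rfl
  have hFicont : ∀ i, ContinuousOn (Fi i) U := by
    intro i
    apply ContinuousOn.sub
    · exact (Continuous.comp (continuous_apply _) continuous_snd).continuousOn
    · exact ((hf _).continuousOn).comp continuous_fst.continuousOn
        (fun z hz => (hUX hz).1)
  by_cases hwP : w P = 0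
  · -- hard case: P is on the hypersurface
    have H : ∀ i : Fin (r+1), ∃ V : Set ((Fin n → ℂ) × (Fin ν → ℂ)),
        IsOpen V ∧ P ∈ V ∧ V ⊆ U ∧ ∃ γ, DifferentiableOn ℂ γ V ∧
        ∀ z ∈ V, (z - w z • v ∈ U ∧ α i z - α i (z - w z • v) = γ z * w z) :=
      fun i => holo_div hU (hα i) hwdiff hv hwv hPU hwP
    choose Vs hVsopen hPVs hVsU γs hγdiff hγ using H
    set V : Set ((Fin n → ℂ) × (Fin ν → ℂ)) := ⋂ i, Vs i with hVdef
    have hVopen : IsOpen V := isOpen_iInter_of_finite hVsopen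
    have hPV : P ∈ V := mem_iInter.2 hPVs
    have hVU : V ⊆ U := (iInter_subset Vs L).trans (hVsU L)
    have hVsub : ∀ i, V ⊆ Vs i := fun i => iInter_subset Vs i
    -- the key vanishing identity
    have hkey : ∀ z ∈ V, w z *
        (α L z + ∑ j : Fin r, γs (Fin.castSucc j) z * Fi (Fin.castSucc j) z) = 0 := by
      intro z hz
      have hzU : z ∈ U := hVU hz
      have h1 := hrel z hzU
      set z' := z - w z • v with hz'def
      have hz'U : z' ∈ U := (hγ L z (hVsub L hz)).1
      have h2 := hrel z' hz'U
      have hwz' : w z' = 0 := by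
        have hzz : z' = z + (-(w z)) • v := by
          rw [hz'def, neg_smul, ← sub_eq_add_neg]
        rw [hzz, hwv]; ring
      rw [Fin.sum_univ_castSucc] at h1 h2
      have hlast_eq : (Fin.last r) = L := rfl
      -- F values at z' agree with those at z for the first r indices
      have hFz' : ∀ j : Fin r, Fi (Fin.castSucc j) z' = Fi (Fin.castSucc j) z := by
        intro j
        have hfst : z'.1 = z.1 := by
          simp [hz'def, hvdef]
        have hne : Fin.castLE hqν (Fin.castSucc j) ≠ jL := by
          intro h
          have := congrArg Fin.val h
          simp only [Fin.coe_castLE, Fin.coe_castSucc, hjLdef] at this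
          change (j : ℕ) = r at this
          omega
        have hsnd : z'.2 (Fin.castLE hqν (Fin.castSucc j)) =
            z.2 (Fin.castLE hqν (Fin.castSucc j)) := by
          have hsingle : (Pi.single jL (1:ℂ) : (Fin ν → ℂ)) (Fin.castLE hqν (Fin.castSucc j)) = 0 :=
            Pi.single_eq_of_ne hne 1
          simp only [hz'def, hvdef]
          simp only [Prod.snd_sub, Prod.smul_mk, Pi.sub_apply, Pi.smul_apply]
          rw [hsingle]
          simp
        rw [hFidef]
        simp only []
        rw [hfst, hsnd]
      -- α values at z'
      have hαz' : ∀ j : Fin r, α (Fin.castSucc j) z' =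
          α (Fin.castSucc j) z - γs (Fin.castSucc j) z * w z := by
        intro j
        have := (hγ (Fin.castSucc j) z (hVsub _ hz)).2
        rw [← hz'def] at this
        linear_combination -this
      -- rewrite h2 using hFz', hαz', hwz'
      have h2' : ∑ j : Fin r, (α (Fin.castSucc j) z - γs (Fin.castSucc j) z * w z) *
          Fi (Fin.castSucc j) z = 0 := by
        have hz'sum : ∑ j : Fin r, α (Fin.castSucc j) z' *
            (z'.2 (Fin.castLE hqν (Fin.castSucc j)) - f (Fin.castLE hqν (Fin.castSucc j)) z'.1)
            = ∑ j : Fin r, (α (Fin.castSucc j) z - γs (Fin.castSucc j) z * w z) *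
              Fi (Fin.castSucc j) z := by
          apply Finset.sum_congr rfl
          intro j _
          rw [hαz' j]
          have := hFz' j
          rw [hFidef] at this
          simp only [] at this
          rw [this]
        rw [hz'sum] at h2
        have hlastz' : z'.2 (Fin.castLE hqν (Fin.last r)) - f (Fin.castLE hqν (Fin.last r)) z'.1
            = 0 := by
          have : Fin.castLE hqν (Fin.last r) = jL := rfl
          rw [this]
          rw [hwdef] at hwz'
          exact hwz'
        rw [hlastz'] at h2
        simpa using h2
      -- combine h1 and h2'
      set S1 : ℂ := ∑ j : Fin r, α (Fin.castSucc j) z * Fi (Fin.castSucc j) z with hS1def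
      set S2 : ℂ := ∑ j : Fin r, (α (Fin.castSucc j) z - γs (Fin.castSucc j) z * w z) *
        Fi (Fin.castSucc j) z with hS2def
      set S3 : ℂ := ∑ j : Fin r, γs (Fin.castSucc j) z * Fi (Fin.castSucc j) z with hS3def
      have hS : S1 - S2 = w z * S3 := by
        rw [hS1def, hS2def, hS3def, ← Finset.sum_sub_distrib, Finset.mul_sum]
        apply Finset.sum_congr rfl
        intro j _
        ring
      have h1' : S1 + α L z * w z = 0 := by
        rw [hS1def]
        have hlast_eq2 : α (Fin.last r) z *
            (z.2 (Fin.castLE hqν (Fin.last r)) - f (Fin.castLE hqν (Fin.last r)) z.1)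
            = α L z * w z := rfl
        rw [← hlast_eq2]
        exact h1
      linear_combination h1' - h2' - hS
    -- density: the bracket itself vanishes on V
    have hbrcont : ContinuousOn
        (fun z => α L z + ∑ j : Fin r, γs (Fin.castSucc j) z * Fi (Fin.castSucc j) z) V := by
      apply ContinuousOn.add
      · exact ((hα L).continuousOn).mono hVU
      · apply continuousOn_finset_sum
        intro j _
        exact (((hγdiff (Fin.castSucc j)).continuousOn).mono (hVsub _)).mul
          ((hFicont (Fin.castSucc j)).mono hVU)
    have hzero : ∀ z ∈ V,
        α L z + ∑ j : Fin r, γs (Fin.castSucc j) z * Fi (Fin.castSucc j) z = 0 := by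
      intro z hz
      by_cases hwz : w z = 0
      · -- density argument
        set g : ((Fin n → ℂ) × (Fin ν → ℂ)) → ℂ :=
          fun z => α L z + ∑ j : Fin r, γs (Fin.castSucc j) z * Fi (Fin.castSucc j) z with hgdef
        have hmap : Continuous (fun t : ℂ => z + t • v) :=
          continuous_const.add (continuous_id.smul continuous_const)
        have htend0 : Filter.Tendsto (fun t : ℂ => z + t • v) (nhdsWithin 0 {(0:ℂ)}ᶜ) (nhds z) := by
          have : Filter.Tendsto (fun t : ℂ => z + t • v) (nhds 0) (nhds z) := by
            have h0 : z + (0:ℂ) • v = z := by simp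
            simpa [h0] using hmap.tendsto 0
          exact this.mono_left nhdsWithin_le_nhds
        have hlim : Filter.Tendsto (fun t : ℂ => g (z + t • v)) (nhdsWithin 0 {(0:ℂ)}ᶜ)
            (nhds (g z)) :=
          ((hbrcont.continuousAt (hVopen.mem_nhds hz)).tendsto).comp htend0
        have hev : ∀ᶠ t : ℂ in nhdsWithin 0 {(0:ℂ)}ᶜ, g (z + t • v) = 0 := by
          have hmem0 : ∀ᶠ t : ℂ in nhds (0:ℂ), z + t • v ∈ V := by
            have h0 : z + (0:ℂ) • v = z := by simp
            have htt : Filter.Tendsto (fun t : ℂ => z + t • v) (nhds 0) (nhds z) := by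
              simpa [h0] using hmap.tendsto 0
            exact htt.eventually_mem (hVopen.mem_nhds hz)
          have hmem : ∀ᶠ t : ℂ in nhdsWithin 0 {(0:ℂ)}ᶜ, z + t • v ∈ V :=
            hmem0.filter_mono nhdsWithin_le_nhds
          filter_upwards [hmem, self_mem_nhdsWithin] with t htV ht0
          have hwt : w (z + t • v) = t := by rw [hwv, hwz, zero_add]
          have := hkey (z + t • v) htV
          rw [hwt] at this
          have ht0' : t ≠ 0 := ht0
          exact (mul_eq_zero.1 this).resolve_left ht0'
        have h0 : Filter.Tendsto (fun t : ℂ => g (z + t • v)) (nhdsWithin 0 {(0:ℂ)}ᶜ)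
            (nhds 0) :=
          Filter.Tendsto.congr' (hev.mono fun t ht => ht.symm) tendsto_const_nhds
        exact tendsto_nhds_unique hlim h0
      · exact (mul_eq_zero.1 (hkey z hz)).resolve_left hwz
    -- conclusion
    refine ⟨V, hVopen, hPV, hVU, fun j => fun z => -(γs (Fin.castSucc j) z), ?_, ?_⟩
    · intro j
      exact ((hγdiff (Fin.castSucc j)).mono (hVsub _)).neg
    · intro z hz
      have := hzero z hz
      have hsum : ∑ j : Fin r, -(γs (Fin.castSucc j) z) *
          (z.2 (Fin.castLE (by omega : r ≤ ν) j) - f (Fin.castLE (by omega) j) z.1)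
          = -∑ j : Fin r, γs (Fin.castSucc j) z * Fi (Fin.castSucc j) z := by
        rw [← Finset.sum_neg_distrib]
        apply Finset.sum_congr rfl
        intro j _
        have hcast : Fin.castLE hqν (Fin.castSucc j) = Fin.castLE (by omega : r ≤ ν) j := rfl
        simp only [hFidef]
        rw [hcast]
        ring
      show α L z = ∑ j : Fin r, -(γs (Fin.castSucc j) z) *
        (z.2 (Fin.castLE (by omega : r ≤ ν) j) - f (Fin.castLE (by omega) j) z.1)
      rw [hsum]
      linear_combination this
  · -- easy case : w P ≠ 0
    set V : Set ((Fin n → ℂ) × (Fin ν → ℂ)) := U ∩ w ⁻¹' ({0}ᶜ) with hVdef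
    have hVopen : IsOpen V := hwdiff.continuousOn.isOpen_inter_preimage hU isOpen_compl_singleton
    have hPV : P ∈ V := ⟨hPU, hwP⟩
    have hVU : V ⊆ U := inter_subset_left
    have hVne : ∀ z ∈ V, w z ≠ 0 := fun z hz => hz.2
    refine ⟨V, hVopen, hPV, hVU,
      fun j => fun z => -(α (Fin.castSucc j) z) * (w z)⁻¹, ?_, ?_⟩
    · intro j
      exact (((hα (Fin.castSucc j)).mono hVU).neg).mul
        (((hwdiff.mono hVU)).inv hVne)
    · intro z hz
      have h1 := hrel z (hVU hz)
      rw [Fin.sum_univ_castSucc] at h1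
      set S1 : ℂ := ∑ j : Fin r, α (Fin.castSucc j) z * Fi (Fin.castSucc j) z with hS1def
      have h1' : S1 + α L z * w z = 0 := h1
      have hsum : ∑ j : Fin r, (-(α (Fin.castSucc j) z) * (w z)⁻¹) *
          (z.2 (Fin.castLE (by omega : r ≤ ν) j) - f (Fin.castLE (by omega) j) z.1)
          = -(w z)⁻¹ * S1 := by
        rw [hS1def, Finset.mul_sum]
        apply Finset.sum_congr rfl
        intro j _
        have hcast : Fin.castLE hqν (Fin.castSucc j) = Fin.castLE (by omega : r ≤ ν) j := rfl
        simp only [hFidef]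
        rw [hcast]
        ring
      show α L z = ∑ j : Fin r, (-(α (Fin.castSucc j) z) * (w z)⁻¹) *
        (z.2 (Fin.castLE (by omega : r ≤ ν) j) - f (Fin.castLE (by omega) j) z.1)
      rw [hsum]
      have hinv : (w z)⁻¹ * w z = 1 := inv_mul_cancel₀ (hVne z hz)
      linear_combination (w z)⁻¹ * h1' - α L z * hinv
end

section
/- Let Ω ⊆ ℂⁿ be open, P₀ ∈ Ω, and φ : Ω → ℝ twice continuously differentiable (over ℝ, viewing ℂⁿ as a real vector space). Assume the Levi form of φ at P₀ is strictly positive definite, i.e. for every v ∈ ℂⁿ with v ≠ 0 one has D²φ(P₀)(v, v) + D²φ(P₀)(i·v, i·v) > 0, where D²φ(P₀) is the second real Fréchet derivative of φ at P₀ (this sum equals 4·Σ_{j,k} ∂²φ/∂z_j∂z̄_k(P₀) v_j conj(v_k)). Then there exist a polynomial function f : ℂⁿ → ℂ of total degree at most 2 (in the complex coordinates z₁,…,zₙ) with f(P₀) = 0, and ε > 0 with the ball of radius ε around P₀ contained in Ω, such that for every z with ‖z − P₀‖ < ε, f(z) = 0 and z ≠ P₀, one has φ(z) > φ(P₀). 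-/
open Set Asymptotics Filter Complex


section
variable {E : Type*} [NormedAddCommGroup E] [NormedSpace ℂ E]

lemma csmul_decomp (c : ℂ) (v : E) : c • v = c.re • v + c.im • (Complex.I • v) := by
  have : c • v = ((c.re : ℂ) + (c.im : ℂ) * Complex.I) • v := by rw [Complex.re_add_im]
  rw [this, add_smul, mul_smul]
  norm_num [Complex.coe_smul]

lemma I_smul_I_smul (v : E) : Complex.I • Complex.I • v = -v := by
  rw [smul_smul, Complex.I_mul_I, neg_one_smul]

/-- complex-linear part of a real-linear functional -/
noncomputable def ellMap (A : E →ₗ[ℝ] ℝ) : E →ₗ[ℂ] ℂ where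
  toFun v := (A v : ℂ) - Complex.I * (A (Complex.I • v) : ℂ)
  map_add' v w := by push_cast [map_add, smul_add]; ring
  map_smul' c v := by
    have h1 : A (c • v) = c.re * A v + c.im * A (Complex.I • v) := by
      rw [csmul_decomp c v]; simp [smul_eq_mul]
    have h2 : A (Complex.I • (c • v)) = c.re * A (Complex.I • v) - c.im * A v := by
      rw [smul_comm, csmul_decomp c (Complex.I • v)]
      simp [I_smul_I_smul, smul_eq_mul]; ring
    simp only [h1, h2, RingHom.id_apply]
    push_cast
    apply Complex.ext <;> simp <;> ring

lemma ellMap_apply (A : E →ₗ[ℝ] ℝ) (v : E) :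
    ellMap A v = (A v : ℂ) - Complex.I * (A (Complex.I • v) : ℂ) := rfl

lemma ellMap_re (A : E →ₗ[ℝ] ℝ) (v : E) : (ellMap A v).re = A v := by
  simp [ellMap]

variable (B : E →L[ℝ] E →L[ℝ] ℝ)

/-- the anti-Hermitian (holomorphic quadratic) part of a real bilinear form, as an ℝ-linear
functional in the second variable -/
noncomputable def Tlin (v : E) : E →ₗ[ℝ] ℝ :=
  (1/2 : ℝ) • ((B v).toLinearMap -
    ((B (Complex.I • v)).toLinearMap).comp ((LinearMap.lsmul ℂ E Complex.I).restrictScalars ℝ))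

lemma Tlin_apply (v w : E) : Tlin B v w = (B v w - B (Complex.I • v) (Complex.I • w)) / 2 := by
  simp [Tlin]; ring

lemma Tlin_swap (v w : E) : Tlin B (Complex.I • v) w = Tlin B v (Complex.I • w) := by
  simp [Tlin_apply, I_smul_I_smul]; ring

lemma Tlin_neg (v w : E) :
    Tlin B (Complex.I • v) (Complex.I • w) = - Tlin B v w := by
  simp [Tlin_apply, I_smul_I_smul]; ring

/-- holomorphic quadratic part as a ℂ-bilinear map -/
noncomputable def qMap : E →ₗ[ℂ] E →ₗ[ℂ] ℂ where
  toFun v := ellMap (Tlin B v)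
  map_add' v v' := by
    ext w
    simp only [ellMap_apply, LinearMap.add_apply, Tlin_apply, smul_add, map_add,
      ContinuousLinearMap.add_apply, Pi.add_apply]
    push_cast
    ring
  map_smul' c v := by
    ext w
    have hTc : ∀ u : E, Tlin B (c • v) u
        = c.re * Tlin B v u + c.im * Tlin B v (Complex.I • u) := by
      intro u
      rw [← Tlin_swap]
      have : Tlin B (c • v) u = c.re * Tlin B v u + c.im * Tlin B (Complex.I • v) u := by
        simp only [Tlin_apply]
        rw [smul_comm Complex.I c v, csmul_decomp c v, csmul_decomp c (Complex.I • v)]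
        simp [smul_eq_mul]
        ring
      rw [this]
    simp only [RingHom.id_apply, LinearMap.smul_apply, ellMap_apply, hTc w,
      hTc (Complex.I • w), I_smul_I_smul, map_neg, smul_eq_mul]
    push_cast
    apply Complex.ext <;> simp <;> ring

lemma qMap_re (v w : E) : (qMap B v w).re = Tlin B v w := by
  simp [qMap, ellMap_re]

end
lemma taylor_order_two {E : Type*} [NormedAddCommGroup E] [NormedSpace ℝ E]
    {φ : E → ℝ} {Ω : Set E} (hΩ : IsOpen Ω) {P₀ : E} (hP₀ : P₀ ∈ Ω)
    (hφ : ContDiffOn ℝ 2 φ Ω) :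
    (fun h => φ (P₀ + h) - φ P₀ - fderiv ℝ φ P₀ h
        - (1/2) * fderiv ℝ (fderiv ℝ φ) P₀ h h) =o[nhds 0] (fun h => ‖h‖^2) := by
  set f' := fderiv ℝ φ with hf'
  set B := fderiv ℝ (fderiv ℝ φ) P₀ with hBdef
  have hφat : ∀ x ∈ Ω, ContDiffAt ℝ 2 φ x := fun x hx => (hφ x hx).contDiffAt (hΩ.mem_nhds hx)
  have hd1 : ∀ x ∈ Ω, DifferentiableAt ℝ φ x := fun x hx =>
    (hφat x hx).differentiableAt two_ne_zero
  have hB : HasFDerivAt f' B P₀ := by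
    have : ContDiffAt ℝ 1 f' P₀ := (hφat P₀ hP₀).fderiv_right (by norm_num)
    exact (this.differentiableAt one_ne_zero).hasFDerivAt
  have hsymm : ∀ v w, B v w = B w v := fun v w =>
    ((hφat P₀ hP₀).isSymmSndFDerivAt (by simp [minSmoothness_of_isRCLikeNormedField])).eq v w
  rw [isLittleO_iff]
  intro ε hε
  have hlo := hasFDerivAt_iff_isLittleO_nhds_zero.1 hB
  rw [isLittleO_iff] at hlo
  have hev : ∀ᶠ k in nhds (0:E), ‖f' (P₀ + k) - f' P₀ - B k‖ ≤ ε * ‖k‖ := hlo hε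
  have hΩev : ∀ᶠ k in nhds (0:E), P₀ + k ∈ Ω := by
    have : Continuous fun k : E => P₀ + k := continuous_const.add continuous_id
    have := this.continuousAt (x := 0)
    simp only [ContinuousAt, add_zero] at this
    exact this (hΩ.mem_nhds hP₀)
  rcases Metric.eventually_nhds_iff_ball.1 (hev.and hΩev) with ⟨δ, hδ, hball⟩
  rw [Metric.eventually_nhds_iff_ball]
  refine ⟨δ, hδ, fun h hh => ?_⟩
  rw [Metric.mem_ball, dist_zero_right] at hh
  -- mean value on closedBall 0 ‖h‖
  set s : Set E := Metric.closedBall (0:E) ‖h‖ with hs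
  have hsub : ∀ k ∈ s, ‖f' (P₀ + k) - f' P₀ - B k‖ ≤ ε * ‖h‖ ∧ P₀ + k ∈ Ω := by
    intro k hk
    rw [Metric.mem_closedBall, dist_zero_right] at hk
    have hkball : k ∈ Metric.ball (0:E) δ := by
      rw [Metric.mem_ball, dist_zero_right]; exact lt_of_le_of_lt hk hh
    obtain ⟨h1, h2⟩ := hball k hkball
    exact ⟨h1.trans (by nlinarith [norm_nonneg k]), h2⟩
  set G : E → ℝ := fun k => φ (P₀ + k) - f' P₀ k - (1/2) * B k k with hG
  set G' : E → E →L[ℝ] ℝ := fun k => f' (P₀ + k) - f' P₀ - B k with hG'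
  have hGd : ∀ k ∈ s, HasFDerivWithinAt G (G' k) s k := by
    intro k hk
    have hmem : P₀ + k ∈ Ω := (hsub k hk).2
    have h1 : HasFDerivAt (fun k : E => φ (P₀ + k)) (f' (P₀ + k)) k := by
      have ht : HasFDerivAt (fun k : E => P₀ + k) (ContinuousLinearMap.id ℝ E) k :=
        (hasFDerivAt_id k).const_add P₀
      have := ((hd1 _ hmem).hasFDerivAt).comp k ht
      exact this
    have h2 : HasFDerivAt (fun k : E => (f' P₀) k) (f' P₀) k := (f' P₀).hasFDerivAt
    have h3 : HasFDerivAt (fun k : E => (B k) k) ((B k).comp (ContinuousLinearMap.id ℝ E)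
        + (ContinuousLinearMap.flip B) k) k :=
      B.hasFDerivAt.clm_apply (hasFDerivAt_id k)
    have h4 : HasFDerivAt (fun k : E => (1/2 : ℝ) * (B k) k)
        ((1/2 : ℝ) • ((B k).comp (ContinuousLinearMap.id ℝ E)
          + (ContinuousLinearMap.flip B) k)) k := h3.const_mul _
    have h5 := (h1.sub h2).sub h4
    have heq : f' (P₀ + k) - f' P₀ - (1/2 : ℝ) • ((B k).comp (ContinuousLinearMap.id ℝ E)
        + (ContinuousLinearMap.flip B) k) = G' k := by
      ext w
      simp [G', ContinuousLinearMap.flip_apply, hsymm k w]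
      ring
    rw [heq] at h5
    exact h5.hasFDerivWithinAt
  have hbound : ∀ k ∈ s, ‖G' k‖ ≤ ε * ‖h‖ := fun k hk => (hsub k hk).1
  have hmv := (convex_closedBall (0:E) ‖h‖).norm_image_sub_le_of_norm_hasFDerivWithin_le
    hGd hbound (Metric.mem_closedBall_self (norm_nonneg h))
    (by rw [Metric.mem_closedBall, dist_zero_right])
  have hG0 : G 0 = φ P₀ := by simp [G]
  rw [hG0, sub_zero] at hmv
  calc ‖φ (P₀ + h) - φ P₀ - (f' P₀) h - 1 / 2 * (B h) h‖
      = ‖G h - φ P₀‖ := by simp only [G]; ring_nf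
    _ ≤ ε * ‖h‖ * ‖h‖ := hmv
    _ ≤ ε * ‖‖h‖ ^ 2‖ := by rw [norm_pow, norm_norm]; ring_nf; rfl

set_option maxHeartbeats 2000000 in
/-- Oka's Theorem 5 (Report IX, 1943): at a point where the Levi form of a C²
function is strictly positive definite, there is a supporting analytic hypersurface
given by a holomorphic polynomial of degree at most 2. -/
theorem supporting_hypersurface_of_strict_levi (n : ℕ)
    (Ω : Set (EuclideanSpace ℂ (Fin n))) (hΩ : IsOpen Ω)
    (P₀ : EuclideanSpace ℂ (Fin n)) (hP₀ : P₀ ∈ Ω)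
    (φ : EuclideanSpace ℂ (Fin n) → ℝ) (hφ : ContDiffOn ℝ 2 φ Ω)
    (hLevi : ∀ v : EuclideanSpace ℂ (Fin n), v ≠ 0 →
      0 < fderiv ℝ (fderiv ℝ φ) P₀ v v
          + fderiv ℝ (fderiv ℝ φ) P₀ (Complex.I • v) (Complex.I • v)) :
    ∃ p : MvPolynomial (Fin n) ℂ, p.totalDegree ≤ 2 ∧
      MvPolynomial.eval (fun i => P₀ i) p = 0 ∧
      ∃ ε > (0 : ℝ), Metric.ball P₀ ε ⊆ Ω ∧
        ∀ z ∈ Metric.ball P₀ ε, MvPolynomial.eval (fun i => z i) p = 0 → z ≠ P₀ →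
          φ P₀ < φ z := by
  classical
  set A := fderiv ℝ φ P₀ with hA
  set B := fderiv ℝ (fderiv ℝ φ) P₀ with hB
  set M : EuclideanSpace ℂ (Fin n) → ℝ :=
    fun v => B v v + B (Complex.I • v) (Complex.I • v) with hM
  have hMsmul : ∀ (t : ℝ) (v : EuclideanSpace ℂ (Fin n)), M (t • v) = t ^ 2 * M v := by
    intro t v
    simp only [hM, smul_comm Complex.I t, map_smul, ContinuousLinearMap.smul_apply,
      smul_eq_mul]
    ring
  obtain ⟨c, hc, hcM⟩ : ∃ c > (0:ℝ), ∀ v : EuclideanSpace ℂ (Fin n), c * ‖v‖ ^ 2 ≤ M v := by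
    rcases subsingleton_or_nontrivial (EuclideanSpace ℂ (Fin n)) with hE | hE
    · refine ⟨1, one_pos, fun v => ?_⟩
      have : v = 0 := Subsingleton.elim v 0
      simp [this, hM]
    · have hMcont : Continuous M := by
        have h1 : Continuous fun v : EuclideanSpace ℂ (Fin n) => B v v :=
          B.continuous.clm_apply continuous_id
        have h2 : Continuous fun v : EuclideanSpace ℂ (Fin n) =>
            B (Complex.I • v) (Complex.I • v) :=
          h1.comp (continuous_const_smul Complex.I :
            Continuous fun v : EuclideanSpace ℂ (Fin n) => Complex.I • v)
        exact h1.add h2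
      obtain ⟨v₀, hv₀⟩ := exists_norm_eq (EuclideanSpace ℂ (Fin n)) (zero_le_one (α := ℝ))
      have hsne : (Metric.sphere (0 : EuclideanSpace ℂ (Fin n)) 1).Nonempty :=
        ⟨v₀, by simp [hv₀]⟩
      obtain ⟨u, hu, humin⟩ :=
        (isCompact_sphere (0 : EuclideanSpace ℂ (Fin n)) 1).exists_isMinOn hsne
          hMcont.continuousOn
      have hunorm : ‖u‖ = 1 := by simpa using hu
      have hune : u ≠ 0 := by intro h; rw [h] at hunorm; simp at hunorm
      refine ⟨M u, hLevi u hune, fun v => ?_⟩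
      rcases eq_or_ne v 0 with rfl | hv
      · simp [hM]
      · have hvn : (0:ℝ) < ‖v‖ := norm_pos_iff.2 hv
        set u' : EuclideanSpace ℂ (Fin n) := ‖v‖⁻¹ • v with hu'
        have hu'mem : u' ∈ Metric.sphere (0 : EuclideanSpace ℂ (Fin n)) 1 := by
          simp [hu', norm_smul, abs_of_pos (inv_pos.2 hvn), inv_mul_cancel₀ hvn.ne']
        have hvu : v = ‖v‖ • u' := by
          rw [hu', smul_smul, mul_inv_cancel₀ hvn.ne', one_smul]
        have h1 : M u * ‖v‖ ^ 2 ≤ M u' * ‖v‖ ^ 2 :=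
          mul_le_mul_of_nonneg_right (humin hu'mem) (sq_nonneg _)
        have h2 : M v = ‖v‖ ^ 2 * M u' := by
          conv_lhs => rw [hvu]
          rw [hMsmul]
        linarith
  -- complex-linear and quadratic holomorphic parts
  set ℓ := ellMap A.toLinearMap with hℓ
  set Q := qMap B with hQdef
  set e : Fin n → EuclideanSpace ℂ (Fin n) := fun i => EuclideanSpace.single i 1 with he
  have hrepr : ∀ w : EuclideanSpace ℂ (Fin n), w = ∑ i, w i • e i := by
    intro w
    have h := (EuclideanSpace.basisFun (Fin n) ℂ).sum_repr w
    simp only [EuclideanSpace.basisFun_repr, EuclideanSpace.basisFun_apply] at h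
    exact h.symm
  have hellsum : ∀ w : EuclideanSpace ℂ (Fin n), ℓ w = ∑ i, w i * ℓ (e i) := by
    intro w
    conv_lhs => rw [hrepr w]
    rw [map_sum]
    simp [smul_eq_mul]
  have hQsum : ∀ w : EuclideanSpace ℂ (Fin n),
      Q w w = ∑ i, ∑ j, w i * w j * Q (e i) (e j) := by
    intro w
    conv_lhs => rw [hrepr w]
    simp only [map_sum, map_smul, LinearMap.sum_apply, LinearMap.smul_apply,
      smul_eq_mul, Finset.mul_sum]
    rw [Finset.sum_comm]
    exact Finset.sum_congr rfl fun i _ => Finset.sum_congr rfl fun j _ => by ring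
  set a : Fin n → ℂ := fun i => ℓ (e i) with ha
  set b : Fin n → Fin n → ℂ := fun i j => Q (e i) (e j) with hb
  set pl : MvPolynomial (Fin n) ℂ :=
    (∑ i, MvPolynomial.C (a i) * (MvPolynomial.X i - MvPolynomial.C (P₀ i)))
    + MvPolynomial.C (1/2 : ℂ) * ∑ i, ∑ j, MvPolynomial.C (b i j) *
        ((MvPolynomial.X i - MvPolynomial.C (P₀ i)) *
          (MvPolynomial.X j - MvPolynomial.C (P₀ j))) with hpl
  have hdegX : ∀ i : Fin n,
      (MvPolynomial.X i - MvPolynomial.C (P₀ i) : MvPolynomial (Fin n) ℂ).totalDegree ≤ 1 := by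
    intro i
    rw [sub_eq_add_neg]
    refine le_trans (MvPolynomial.totalDegree_add _ _) (max_le ?_ ?_)
    · exact le_of_eq (MvPolynomial.totalDegree_X i)
    · rw [MvPolynomial.totalDegree_neg, MvPolynomial.totalDegree_C]; omega
  have hdeg : pl.totalDegree ≤ 2 := by
    refine le_trans (MvPolynomial.totalDegree_add _ _) (max_le ?_ ?_)
    · refine MvPolynomial.totalDegree_finsetSum_le fun i _ => ?_
      refine le_trans (MvPolynomial.totalDegree_mul _ _) ?_
      rw [MvPolynomial.totalDegree_C]
      exact le_trans (by simpa using hdegX i) one_le_two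
    · refine le_trans (MvPolynomial.totalDegree_mul _ _) ?_
      rw [MvPolynomial.totalDegree_C, zero_add]
      refine MvPolynomial.totalDegree_finsetSum_le fun i _ => ?_
      refine MvPolynomial.totalDegree_finsetSum_le fun j _ => ?_
      refine le_trans (MvPolynomial.totalDegree_mul _ _) ?_
      rw [MvPolynomial.totalDegree_C, zero_add]
      refine le_trans (MvPolynomial.totalDegree_mul _ _) ?_
      exact add_le_add (hdegX i) (hdegX j)
  have heval : ∀ z : EuclideanSpace ℂ (Fin n), MvPolynomial.eval (fun i => z i) pl
      = ℓ (z - P₀) + (1/2 : ℂ) * Q (z - P₀) (z - P₀) := by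
    intro z
    have e1 : MvPolynomial.eval (fun i => z i) pl
        = (∑ i, a i * (z i - P₀ i))
          + (1/2 : ℂ) * ∑ i, ∑ j, b i j * ((z i - P₀ i) * (z j - P₀ j)) := by
      rw [hpl, map_add, map_mul, MvPolynomial.eval_C, map_sum]
      congr 1
      · refine Finset.sum_congr rfl fun i _ => ?_
        rw [map_mul, MvPolynomial.eval_C, map_sub, MvPolynomial.eval_X, MvPolynomial.eval_C]
      · congr 1
        rw [map_sum]
        refine Finset.sum_congr rfl fun i _ => ?_
        rw [map_sum]
        refine Finset.sum_congr rfl fun j _ => ?_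
        rw [map_mul, MvPolynomial.eval_C, map_mul, map_sub, map_sub,
          MvPolynomial.eval_X, MvPolynomial.eval_C, MvPolynomial.eval_X, MvPolynomial.eval_C]
    rw [e1, hellsum, hQsum]
    simp only [PiLp.sub_apply]
    congr 1
    · exact Finset.sum_congr rfl fun i _ => by ring
    · congr 1
      exact Finset.sum_congr rfl fun i _ => Finset.sum_congr rfl fun j _ => by ring
  have hevalP₀ : MvPolynomial.eval (fun i => P₀ i) pl = 0 := by
    rw [heval P₀]
    simp
  -- Taylor estimate
  have htay := taylor_order_two hΩ hP₀ hφ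
  rw [isLittleO_iff] at htay
  have hev8 := htay (show (0:ℝ) < c/8 by linarith)
  rw [Metric.eventually_nhds_iff_ball] at hev8
  obtain ⟨δ₁, hδ₁, hballF⟩ := hev8
  obtain ⟨r, hr, hrsub⟩ := Metric.isOpen_iff.1 hΩ P₀ hP₀
  refine ⟨pl, hdeg, hevalP₀, min δ₁ r, lt_min hδ₁ hr,
    (Metric.ball_subset_ball (min_le_right _ _)).trans hrsub, ?_⟩
  intro z hz hzero hne
  set h : EuclideanSpace ℂ (Fin n) := z - P₀ with hh
  have hdist : ‖h‖ < min δ₁ r := by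
    rw [hh, ← dist_eq_norm]
    exact Metric.mem_ball.1 hz
  have hF := hballF h (by
    rw [Metric.mem_ball, dist_zero_right]
    exact lt_of_lt_of_le hdist (min_le_left _ _))
  have hPh : P₀ + h = z := by rw [hh]; abel
  rw [hPh] at hF
  -- real part of the polynomial value
  have hre : A h + (1/2 : ℝ) * Tlin B h h = 0 := by
    have h0 : (MvPolynomial.eval (fun i => z i) pl).re = 0 := by rw [hzero]; rfl
    rw [heval z, ← hh] at h0
    have h1 : ((1/2 : ℂ) * Q h h).re = (1/2 : ℝ) * (Q h h).re := by
      simp [Complex.mul_re]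
    rw [Complex.add_re, h1, hQdef, qMap_re, hℓ, ellMap_re] at h0
    simpa using h0
  have hTT : Tlin B h h = (B h h - B (Complex.I • h) (Complex.I • h)) / 2 := Tlin_apply B h h
  have hkey : A h + (1/2 : ℝ) * B h h
      = (1/4 : ℝ) * M h + (A h + (1/2 : ℝ) * Tlin B h h) := by
    rw [hTT]
    simp only [hM]
    ring
  have hne0 : h ≠ 0 := sub_ne_zero.2 hne
  have hnorm : (0:ℝ) < ‖h‖ := norm_pos_iff.2 hne0
  have hMh : c * ‖h‖ ^ 2 ≤ M h := hcM h
  have hFn : |φ z - φ P₀ - A h - 1/2 * B h h| ≤ c/8 * ‖h‖^2 := by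
    have : ‖(‖h‖^2 : ℝ)‖ = ‖h‖^2 := Real.norm_of_nonneg (sq_nonneg _)
    rw [this] at hF
    exact hF
  have habs := abs_le.1 hFn
  have h5 : (1/4 : ℝ) * M h - c/8 * ‖h‖^2 ≤ φ z - φ P₀ := by linarith [habs.1]
  have h6 : (0:ℝ) < c/8 * ‖h‖^2 := by positivity
  clear_value M h
  have h7 : c * ‖h‖^2 / 4 ≤ 1/4 * M h := by linarith [hMh]
  have h8 : c/8 * ‖h‖^2 = c * ‖h‖^2 / 8 := by ring
  have h9 : (0:ℝ) < c * ‖h‖^2 := by positivity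
  linarith
end
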